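/- Let B ∈ ℝ^{p×p}, let F_1,…,F_p ∈ ℝ^{p×p} be symmetric positive semidefinite, let f_1,…,f_p > 0, and define Σ(z) = diag((f_1 + zᵀF_1 z)^{1/2}, …, (f_p + zᵀF_p z)^{1/2}). Let η be a mean-zero random vector in ℝ^p with σ² := E‖η‖₂² < ∞, and set λ := ‖B‖₂² + σ²·max_{1≤j≤p} λ_max(F_j) and K := 1 − λ + σ²·max_{1≤j≤p} f_j. Then for every z ∈ ℝ^p, the drift function V(z) = 1 + ‖z‖₂² satisfies E[V(Bᵀz + Σ(z)η)] ≤ λ·V(z) + K. Consequently, if λ < 1, then E[V(Bᵀz + Σ(z)η)] ≤ ((1 + λ)/2)·V(z) for every z with V(z) ≥ 2K/(1 − λ). -/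

import Mathlib

open MeasureTheory
open scoped RealInnerProductSpace


lemma quadForm_le {p : ℕ} {A : Matrix (Fin p) (Fin p) ℝ} (hA : A.IsHermitian) {c : ℝ}
    (hc : ∀ i, hA.eigenvalues i ≤ c) (z : EuclideanSpace ℝ (Fin p)) :
    ⟪Matrix.toEuclideanLin A z, z⟫ ≤ c * ‖z‖ ^ 2 := by
  set b := hA.eigenvectorBasis
  have hb : ∀ i, Matrix.toEuclideanLin A (b i) = hA.eigenvalues i • b i := by
    intro i
    apply (WithLp.equiv 2 (Fin p → ℝ)).injective
    simpa [Matrix.piLp_ofLp_toEuclideanLin] using hA.mulVec_eigenvectorBasis i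
  have hz : Matrix.toEuclideanLin A z = ∑ i, (hA.eigenvalues i * b.repr z i) • b i := by
    conv_lhs => rw [← b.sum_repr z]
    rw [map_sum]
    refine Finset.sum_congr rfl fun i _ => ?_
    rw [LinearMap.map_smul, hb i, smul_smul, mul_comm]
  have hinner : ⟪Matrix.toEuclideanLin A z, z⟫ =
      ∑ i, hA.eigenvalues i * (b.repr z i * b.repr z i) := by
    rw [hz, sum_inner]
    refine Finset.sum_congr rfl fun i _ => ?_
    rw [real_inner_smul_left, ← b.repr_apply_apply, mul_assoc]
  have hnorm : ‖z‖ ^ 2 = ∑ i, b.repr z i * b.repr z i := by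
    rw [← real_inner_self_eq_norm_sq, ← b.repr.inner_map_map z z, PiLp.inner_apply]
    simp [RCLike.inner_apply, sq]
  rw [hinner, hnorm, Finset.mul_sum]
  exact Finset.sum_le_sum fun i _ => mul_le_mul_of_nonneg_right (hc i) (mul_self_nonneg _)

lemma diag_norm_sq_le {p : ℕ} (d : Fin p → ℝ) {c : ℝ} (hc : ∀ j, d j ^ 2 ≤ c)
    (x : EuclideanSpace ℝ (Fin p)) :
    ‖Matrix.toEuclideanCLM (𝕜 := ℝ) (Matrix.diagonal d) x‖ ^ 2 ≤ c * ‖x‖ ^ 2 := by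
  have hx : ∀ y : EuclideanSpace ℝ (Fin p), ‖y‖ ^ 2 = ∑ j, y j ^ 2 := by
    intro y
    rw [← real_inner_self_eq_norm_sq, PiLp.inner_apply]
    simp [RCLike.inner_apply, sq]
  have happ : ∀ j, (Matrix.toEuclideanCLM (𝕜 := ℝ) (Matrix.diagonal d) x) j = d j * x j := by
    intro j
    change Matrix.toLin' (Matrix.diagonal d) (WithLp.equiv _ _ x) j = _
    rw [Matrix.toLin'_apply, Matrix.mulVec_diagonal]
    rfl
  rw [hx, hx, Finset.mul_sum]
  refine Finset.sum_le_sum fun j _ => ?_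
  rw [happ, mul_pow]
  exact mul_le_mul_of_nonneg_right (hc j) (sq_nonneg _)

set_option synthInstance.maxHeartbeats 1000000 in
lemma norm_clm_transpose {p : ℕ} (B : Matrix (Fin p) (Fin p) ℝ) :
    ‖Matrix.toEuclideanCLM (𝕜 := ℝ) B.transpose‖ = ‖Matrix.toEuclideanCLM (𝕜 := ℝ) B‖ := by
  rw [← Matrix.conjTranspose_eq_transpose_of_trivial, ← Matrix.star_eq_conjTranspose,
    map_star, ContinuousLinearMap.star_eq_adjoint]
  exact ContinuousLinearMap.adjoint.norm_map _

/-- The diagonal ARCH conditional standard deviation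
`Σ(z) = diag((f₁ + zᵀF₁z)^{1/2}, …, (f_p + zᵀF_pz)^{1/2})`. -/
noncomputable def archSigma {p : ℕ} (f : Fin p → ℝ) (F : Fin p → Matrix (Fin p) (Fin p) ℝ)
    (z : EuclideanSpace ℝ (Fin p)) : Matrix (Fin p) (Fin p) ℝ :=
  Matrix.diagonal fun j => Real.sqrt (f j + ⟪Matrix.toEuclideanLin (F j) z, z⟫)

/-- **Drift condition for the ARCH-type vector autoregression.**
With `V(z) = 1 + ‖z‖₂²`, `λ = ‖B‖₂² + σ²·max_j λ_max(F_j)` and `K = 1 - λ + σ²·max_j f_j`,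
we have `E[V(Bᵀz + Σ(z)η)] ≤ λV(z) + K` for all `z`; if moreover `λ < 1` then
`E[V(Bᵀz + Σ(z)η)] ≤ ((1+λ)/2)·V(z)` whenever `V(z) ≥ 2K/(1-λ)`. -/
theorem arch_var_drift {Ω : Type*} [MeasurableSpace Ω] {p : ℕ} (hp : 0 < p)
    (μ : Measure Ω) [IsProbabilityMeasure μ]
    (B : Matrix (Fin p) (Fin p) ℝ)
    (F : Fin p → Matrix (Fin p) (Fin p) ℝ) (hF_psd : ∀ j, (F j).PosSemidef)
    (f : Fin p → ℝ) (hf : ∀ j, 0 < f j)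
    (η : Ω → EuclideanSpace ℝ (Fin p)) (hη_meas : Measurable η)
    (hη_sq_int : Integrable (fun ω => ‖η ω‖ ^ 2) μ)
    (hη_mean : (∫ ω, η ω ∂μ) = 0)
    (σ2 : ℝ) (hσ2 : σ2 = ∫ ω, ‖η ω‖ ^ 2 ∂μ)
    -- `lmax j` is the largest eigenvalue of `F j`
    (lmax : Fin p → ℝ) (hlmax : ∀ j, IsGreatest (Set.range (hF_psd j).1.eigenvalues) (lmax j))
    (lam K : ℝ)
    (hlam : lam = ‖Matrix.toEuclideanCLM (𝕜 := ℝ) B‖ ^ 2 + σ2 * (⨆ j, lmax j))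
    (hK : K = 1 - lam + σ2 * (⨆ j, f j)) :
    (∀ z : EuclideanSpace ℝ (Fin p),
      (∫ ω, (1 + ‖Matrix.toEuclideanCLM (𝕜 := ℝ) B.transpose z +
          Matrix.toEuclideanCLM (𝕜 := ℝ) (archSigma f F z) (η ω)‖ ^ 2) ∂μ) ≤
        lam * (1 + ‖z‖ ^ 2) + K) ∧
    (lam < 1 → ∀ z : EuclideanSpace ℝ (Fin p), 2 * K / (1 - lam) ≤ 1 + ‖z‖ ^ 2 →
      (∫ ω, (1 + ‖Matrix.toEuclideanCLM (𝕜 := ℝ) B.transpose z +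
          Matrix.toEuclideanCLM (𝕜 := ℝ) (archSigma f F z) (η ω)‖ ^ 2) ∂μ) ≤
        ((1 + lam) / 2) * (1 + ‖z‖ ^ 2)) := by
  haveI : Nonempty (Fin p) := ⟨⟨0, hp⟩⟩
  have hσ2_nonneg : 0 ≤ σ2 := by
    rw [hσ2]; exact integral_nonneg fun ω => sq_nonneg _
  have hlmax_nonneg : ∀ j, 0 ≤ lmax j := by
    intro j
    obtain ⟨i, hi⟩ := (hlmax j).1
    exact hi ▸ (hF_psd j).eigenvalues_nonneg i
  have hsupl_nonneg : 0 ≤ ⨆ j, lmax j :=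
    le_trans (hlmax_nonneg (Classical.arbitrary _)) (le_ciSup (Set.Finite.bddAbove
      (Set.finite_range _)) _)
  have hsupl : ∀ j, lmax j ≤ ⨆ j, lmax j := fun j =>
    le_ciSup (Set.Finite.bddAbove (Set.finite_range _)) j
  have hsupf : ∀ j, f j ≤ ⨆ j, f j := fun j =>
    le_ciSup (Set.Finite.bddAbove (Set.finite_range _)) j
  -- integrability of η
  have hη_int : Integrable η μ := by
    refine Integrable.mono' ((integrable_const 1).add hη_sq_int)
      hη_meas.aestronglyMeasurable (ae_of_all _ fun ω => ?_)
    simp only [Pi.add_apply]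
    nlinarith [sq_nonneg (‖η ω‖ - 1), norm_nonneg (η ω)]
  have hmain : ∀ z : EuclideanSpace ℝ (Fin p),
      (∫ ω, (1 + ‖Matrix.toEuclideanCLM (𝕜 := ℝ) B.transpose z +
          Matrix.toEuclideanCLM (𝕜 := ℝ) (archSigma f F z) (η ω)‖ ^ 2) ∂μ) ≤
        lam * (1 + ‖z‖ ^ 2) + K := by
    intro z
    set C := Matrix.toEuclideanCLM (𝕜 := ℝ) (archSigma f F z) with hC
    set a := Matrix.toEuclideanCLM (𝕜 := ℝ) B.transpose z with ha
    set c1 : ℝ := (⨆ j, f j) + (⨆ j, lmax j) * ‖z‖ ^ 2 with hc1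
    -- quadratic form nonneg and bounds
    have hq_nonneg : ∀ j, 0 ≤ ⟪Matrix.toEuclideanLin (F j) z, z⟫ := by
      intro j
      have h := (hF_psd j).dotProduct_mulVec_nonneg ((WithLp.equiv 2 (Fin p → ℝ)) z)
      rw [PiLp.inner_apply]
      simp only [RCLike.inner_apply, starRingEnd_apply, star_trivial]
      simpa [dotProduct, Matrix.toEuclideanLin_apply, mul_comm] using h
    have hq_le : ∀ j, ⟪Matrix.toEuclideanLin (F j) z, z⟫ ≤ lmax j * ‖z‖ ^ 2 := fun j =>
      quadForm_le (hF_psd j).1 (fun i => (hlmax j).2 (Set.mem_range_self i)) z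
    have hd_sq : ∀ j, (Real.sqrt (f j + ⟪Matrix.toEuclideanLin (F j) z, z⟫)) ^ 2 ≤ c1 := by
      intro j
      rw [Real.sq_sqrt (by linarith [hq_nonneg j, (hf j).le])]
      have := mul_le_mul_of_nonneg_right (hsupl j) (sq_nonneg ‖z‖)
      linarith [hq_le j, hsupf j]
    have hCbound : ∀ x : EuclideanSpace ℝ (Fin p), ‖C x‖ ^ 2 ≤ c1 * ‖x‖ ^ 2 := fun x =>
      diag_norm_sq_le _ hd_sq x
    -- measurability / integrability pieces
    have hg_meas : Measurable fun ω => C (η ω) := C.continuous.measurable.comp hη_meas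
    have h1 : Integrable (fun ω => ‖C (η ω)‖ ^ 2) μ := by
      refine Integrable.mono' (hη_sq_int.const_mul c1)
        ((hg_meas.norm.pow_const 2).aestronglyMeasurable) (ae_of_all _ fun ω => ?_)
      rw [Real.norm_of_nonneg (sq_nonneg _)]
      exact hCbound (η ω)
    have h2 : Integrable (fun ω => ⟪a, C (η ω)⟫) μ :=
      ((innerSL ℝ a).comp C).integrable_comp hη_int
    -- expand the square
    have hexp : ∀ ω, (1 : ℝ) + ‖a + C (η ω)‖ ^ 2 =
        (1 + ‖a‖ ^ 2) + (2 * ⟪a, C (η ω)⟫ + ‖C (η ω)‖ ^ 2) := by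
      intro ω
      rw [@norm_add_sq_real]
      ring
    have hint_eq : (∫ ω, (1 + ‖a + C (η ω)‖ ^ 2) ∂μ) =
        (1 + ‖a‖ ^ 2) + (2 * ∫ ω, ⟪a, C (η ω)⟫ ∂μ + ∫ ω, ‖C (η ω)‖ ^ 2 ∂μ) := by
      have h2' : Integrable (fun ω => 2 * ⟪a, C (η ω)⟫) μ := h2.const_mul 2
      have h3 : Integrable (fun ω => 2 * ⟪a, C (η ω)⟫ + ‖C (η ω)‖ ^ 2) μ := h2'.add h1
      simp only [hexp]
      rw [integral_add (integrable_const _) h3, integral_add h2' h1, integral_const,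
        integral_const_mul]
      simp
    have hcross : (∫ ω, ⟪a, C (η ω)⟫ ∂μ) = 0 := by
      have : (fun ω => ⟪a, C (η ω)⟫) = fun ω => ((innerSL ℝ a).comp C) (η ω) := rfl
      rw [this, ContinuousLinearMap.integral_comp_comm _ hη_int, hη_mean, map_zero]
    have hI2 : (∫ ω, ‖C (η ω)‖ ^ 2 ∂μ) ≤ c1 * σ2 := by
      rw [hσ2, ← integral_const_mul]
      exact integral_mono h1 (hη_sq_int.const_mul c1) fun ω => hCbound (η ω)
    have hBz : ‖a‖ ^ 2 ≤ ‖Matrix.toEuclideanCLM (𝕜 := ℝ) B‖ ^ 2 * ‖z‖ ^ 2 := by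
      rw [← mul_pow, ← norm_clm_transpose]
      exact pow_le_pow_left₀ (norm_nonneg _) (ContinuousLinearMap.le_opNorm _ _) 2
    rw [hint_eq, hcross]
    have h3 : σ2 * (⨆ j, lmax j) * ‖z‖ ^ 2 = σ2 * ((⨆ j, lmax j) * ‖z‖ ^ 2) := by ring
    subst hlam hK
    nlinarith [hI2, hBz, sq_nonneg ‖z‖]
  refine ⟨hmain, fun hlt z hz => ?_⟩
  have h1lam : 0 < 1 - lam := by linarith
  have h2K : 2 * K ≤ (1 + ‖z‖ ^ 2) * (1 - lam) := (div_le_iff₀ h1lam).mp hz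
  have := hmain z
  nlinarith [this]
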